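/- arXiv:2404.08280 — 2 statements merged into one kernel-verified Lean document; each statement's English description precedes it below -/
import Mathlib

section
/- (Asymptotic Trace Lemma) Let α = (a_1,…,a_k) ∈ F_2^k and let β = (a_{t+1},…,a_{t+r}) ∈ F_2^r be a contiguous subsequence with t + r ≤ k, such that β is neither the all-zero vector nor the all-one vector of length r. Then f_α(n) = O(f_β(n)); that is, there is a constant C > 0 such that f_α(n) ≤ C·f_β(n) for all sufficiently large n. -/
open Filter

/-- A family `F` of subsets of `[n]` (modeled as `Fin n`) is `α`-intersecting modulo 2 for a
vector `α ∈ F_2^k` if for each `ℓ ∈ [k]`, any `ℓ` pairwise distinct members of `F`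
have an intersection of cardinality congruent to `a_ℓ` modulo 2.
Here `α ⟨ℓ-1,_⟩` denotes the coordinate `a_ℓ` (0-based indexing of a 1-based vector). -/
def IsIntersecting (k n : ℕ) (α : Fin k → ZMod 2) (F : Finset (Finset (Fin n))) : Prop :=
  ∀ (ℓ : Fin k) (S : Finset (Finset (Fin n))), S ⊆ F → S.card = ℓ.1 + 1 →
    ((S.inf id).card : ZMod 2) = α ℓ

/-- `fMax k n α` is the maximum size of an `α`-intersecting (mod 2) family of subsets of `[n]`. -/
noncomputable def fMax (k n : ℕ) (α : Fin k → ZMod 2) : ℕ :=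
  sSup {m | ∃ F : Finset (Finset (Fin n)), IsIntersecting k n α F ∧ F.card = m}

lemma fMaxSet_bdd (k n : ℕ) (α : Fin k → ZMod 2) :
    BddAbove {m | ∃ F : Finset (Finset (Fin n)), IsIntersecting k n α F ∧ F.card = m} := by
  refine ⟨Fintype.card (Finset (Fin n)), ?_⟩
  rintro m ⟨F, _, rfl⟩
  exact Finset.card_le_univ F

lemma exists_adjacent {r : ℕ} (β : Fin r → ZMod 2) (h0 : β ≠ fun _ => 0)
    (h1 : β ≠ fun _ => 1) :
    ∃ j : ℕ, ∃ hj : j + 1 < r, β ⟨j, by omega⟩ ≠ β ⟨j + 1, hj⟩ := by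
  by_contra hc
  push_neg at hc
  have hr : 0 < r := by
    rcases Nat.eq_zero_or_pos r with h | h
    · subst h; exact absurd (funext fun j => j.elim0) h0
    · exact h
  have hconst : ∀ i : Fin r, β i = β ⟨0, hr⟩ := by
    rintro ⟨i, hi⟩
    induction i with
    | zero => rfl
    | succ m ih =>
      have := hc m hi
      rw [← this]
      exact ih (by omega)
  have h01 : ∀ x : ZMod 2, x = 0 ∨ x = 1 := by decide
  rcases h01 (β ⟨0, hr⟩) with h | h
  · exact h0 (funext fun i => by rw [hconst i, h])
  · exact h1 (funext fun i => by rw [hconst i, h])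

lemma inf_inter_eq {n : ℕ} (S : Finset (Finset (Fin n))) (hS : S.Nonempty)
    (X : Finset (Fin n)) : S.inf (fun G => G ⊓ X) = S.inf id ⊓ X := by
  have h : (fun G : Finset (Fin n) => G ⊓ X) = (id ⊓ fun _ => X) := rfl
  rw [h, Finset.inf_inf, Finset.inf_const hS]

lemma one_le_fMax {r n : ℕ} (hr : 0 < r) (hn : 0 < n) (β : Fin r → ZMod 2) :
    1 ≤ fMax r n β := by
  set s : Finset (Fin n) := if β ⟨0, hr⟩ = 0 then ∅ else {⟨0, hn⟩} with hs
  have hcard : ((s.card : ZMod 2)) = β ⟨0, hr⟩ := by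
    rcases (by decide : ∀ x : ZMod 2, x = 0 ∨ x = 1) (β ⟨0, hr⟩) with h | h <;>
      simp [hs, h]
  have hI : IsIntersecting r n β {s} := by
    intro ℓ S hS hScard
    rcases Finset.subset_singleton_iff.mp hS with rfl | rfl
    · simp at hScard
    · have h1 : ℓ.1 = 0 := by simpa using hScard.symm
      have hℓ : ℓ = ⟨0, hr⟩ := Fin.ext h1
      subst hℓ
      simpa using hcard
  exact le_csSup (fMaxSet_bdd r n β) ⟨{s}, hI, Finset.card_singleton s⟩

lemma key_bound {k r t n : ℕ} (htr : t + r ≤ k) (α : Fin k → ZMod 2) (β : Fin r → ZMod 2)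
    (hβ : ∀ j : Fin r, β j = α ⟨t + j.1, Nat.lt_of_lt_of_le (Nat.add_lt_add_left j.isLt t) htr⟩)
    (hadj : ∃ j : ℕ, ∃ hj : j + 1 < r, β ⟨j, by omega⟩ ≠ β ⟨j + 1, hj⟩)
    (F : Finset (Finset (Fin n))) (hF : IsIntersecting k n α F) :
    F.card ≤ t + r + fMax r n β := by
  by_cases hm : F.card ≤ t + r
  · omega
  push_neg at hm
  obtain ⟨T, hTF, hTcard⟩ := Finset.exists_subset_card_eq (show t ≤ F.card by omega)
  set X := T.inf id with hX
  -- injectivity of trace on F \ T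
  have hinj : Set.InjOn (fun G => G ⊓ X) (F \ T : Finset (Finset (Fin n))) := by
    intro G hG G' hG' hGG'
    simp only [Finset.coe_sdiff, Set.mem_diff, Finset.mem_coe] at hG hG'
    by_contra hne
    obtain ⟨j, hj, hne_adj⟩ := hadj
    have hsmall : (T ∪ {G, G'}).card ≤ t + 2 := by
      calc (T ∪ {G, G'}).card ≤ T.card + ({G, G'} : Finset _).card :=
            Finset.card_union_le _ _
        _ ≤ t + 2 := by
            have := Finset.card_insert_le G ({G'} : Finset (Finset (Fin n)))
            simp only [Finset.card_singleton] at this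
            omega
    have hDle : j ≤ (F \ (T ∪ {G, G'})).card := by
      have h1 : F.card - (T ∪ {G, G'}).card ≤ (F \ (T ∪ {G, G'})).card :=
        Finset.le_card_sdiff _ _
      omega
    obtain ⟨D, hDsub, hDcard⟩ := Finset.exists_subset_card_eq hDle
    have hDF : D ⊆ F := fun x hx => (Finset.mem_sdiff.mp (hDsub hx)).1
    have hDnotin : ∀ x ∈ D, x ∉ T ∪ ({G, G'} : Finset _) :=
      fun x hx => (Finset.mem_sdiff.mp (hDsub hx)).2
    have hGD : G ∉ D := fun h => hDnotin G h (by simp)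
    have hG'D : G' ∉ D := fun h => hDnotin G' h (by simp)
    have hdisjTD : Disjoint T D := by
      rw [Finset.disjoint_right]
      intro x hx hxT
      exact hDnotin x hx (Finset.mem_union_left _ hxT)
    have hTD : (T ∪ D).card = t + j := by
      rw [Finset.card_union_of_disjoint hdisjTD, hTcard, hDcard]
    have hGnotTD : G ∉ T ∪ D := by
      simp only [Finset.mem_union]
      rintro (h | h)
      · exact hG.2 h
      · exact hGD h
    have hG'notTD : G' ∉ T ∪ D := by
      simp only [Finset.mem_union]
      rintro (h | h)
      · exact hG'.2 h
      · exact hG'D h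
    set S1 : Finset (Finset (Fin n)) := insert G (T ∪ D) with hS1
    set S2 : Finset (Finset (Fin n)) := insert G' S1 with hS2
    have hS1card : S1.card = t + j + 1 := by
      rw [hS1, Finset.card_insert_of_notMem hGnotTD, hTD]
    have hG'S1 : G' ∉ S1 := by
      simp only [hS1, Finset.mem_insert]
      rintro (h | h)
      · exact hne h.symm
      · exact hG'notTD h
    have hS2card : S2.card = t + j + 2 := by
      rw [hS2, Finset.card_insert_of_notMem hG'S1, hS1card]
    have hS1F : S1 ⊆ F := by
      rw [hS1]
      intro x hx
      rcases Finset.mem_insert.mp hx with rfl | hx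
      · exact hG.1
      · rcases Finset.mem_union.mp hx with h | h
        · exact hTF h
        · exact hDF h
    have hS2F : S2 ⊆ F := by
      rw [hS2]
      intro x hx
      rcases Finset.mem_insert.mp hx with rfl | hx
      · exact hG'.1
      · exact hS1F hx
    have hinf1 : S1.inf id = G ⊓ (X ⊓ D.inf id) := by
      rw [hS1, Finset.inf_insert, Finset.inf_union]
      rfl
    have hinf2 : S2.inf id = S1.inf id := by
      rw [hS2, Finset.inf_insert]
      have hle : S1.inf id ≤ G' := by
        rw [hinf1]
        calc G ⊓ (X ⊓ D.inf id) ≤ G ⊓ X := by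
              exact le_inf inf_le_left (le_trans inf_le_right inf_le_left)
          _ = G' ⊓ X := hGG'
          _ ≤ G' := inf_le_left
      exact inf_eq_right.mpr hle
    have hA : ((S1.inf id).card : ZMod 2) = α ⟨t + j, by omega⟩ :=
      hF ⟨t + j, by omega⟩ S1 hS1F (by simpa using hS1card)
    have hB : ((S2.inf id).card : ZMod 2) = α ⟨t + j + 1, by omega⟩ :=
      hF ⟨t + j + 1, by omega⟩ S2 hS2F (by simpa using hS2card)
    have hB' : ((S2.inf id).card : ZMod 2) = α ⟨t + (j + 1), by omega⟩ := hB
    apply hne_adj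
    rw [hβ ⟨j, by omega⟩, hβ ⟨j + 1, hj⟩]
    rw [← hA, ← hB', hinf2]
  -- the trace family
  set FB : Finset (Finset (Fin n)) := (F \ T).image (fun G => G ⊓ X) with hFB
  have hFBcard : FB.card = F.card - t := by
    rw [hFB, Finset.card_image_of_injOn hinj, Finset.card_sdiff_of_subset hTF, hTcard]
  have hFBint : IsIntersecting r n β FB := by
    intro ℓ S hS hScard
    obtain ⟨S', hS'sub, rfl⟩ := Finset.subset_image_iff.mp hS
    have hinjS' : Set.InjOn (fun G => G ⊓ X) S' :=
      hinj.mono (Finset.coe_subset.mpr hS'sub)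
    have hS'card : S'.card = ℓ.1 + 1 := by
      rw [← Finset.card_image_of_injOn hinjS']
      exact hScard
    have hS'ne : S'.Nonempty := Finset.card_pos.mp (by omega)
    have hinf : (S'.image (fun G => G ⊓ X)).inf id = (S' ∪ T).inf id := by
      rw [Finset.inf_image, Finset.inf_union]
      have : (id ∘ fun G : Finset (Fin n) => G ⊓ X) = fun G => G ⊓ X := rfl
      rw [this, inf_inter_eq S' hS'ne X]
    have hdisj : Disjoint S' T := by
      rw [Finset.disjoint_left]
      intro x hx hxT
      exact (Finset.mem_sdiff.mp (hS'sub hx)).2 hxT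
    have hScard2 : (S' ∪ T).card = ℓ.1 + 1 + t := by
      rw [Finset.card_union_of_disjoint hdisj, hS'card, hTcard]
    have hSF : S' ∪ T ⊆ F := by
      intro x hx
      rcases Finset.mem_union.mp hx with h | h
      · exact (Finset.mem_sdiff.mp (hS'sub h)).1
      · exact hTF h
    have hlt : t + ℓ.1 < k := by have := ℓ.isLt; omega
    have := hF ⟨t + ℓ.1, hlt⟩ (S' ∪ T) hSF (by simp; omega)
    rw [hinf, this, hβ ℓ]
  have hmem : F.card - t ∈
      {m | ∃ G : Finset (Finset (Fin n)), IsIntersecting r n β G ∧ G.card = m} :=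
    ⟨FB, hFBint, hFBcard⟩
  have := le_csSup (fMaxSet_bdd r n β) hmem
  have h2 : F.card - t ≤ fMax r n β := this
  omega

theorem stmt7 (k r t : ℕ) (htr : t + r ≤ k) (α : Fin k → ZMod 2) (β : Fin r → ZMod 2)
    (hβ : ∀ j : Fin r, β j = α ⟨t + j.1, by have := j.isLt; omega⟩)
    (hβ0 : β ≠ fun _ => 0) (hβ1 : β ≠ fun _ => 1) :
    ∃ C : ℝ, 0 < C ∧ ∀ᶠ n : ℕ in atTop,
      (fMax k n α : ℝ) ≤ C * (fMax r n β : ℝ) := by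
  have hadj := exists_adjacent β hβ0 hβ1
  have hr : 0 < r := by
    obtain ⟨j, hj, _⟩ := hadj
    omega
  refine ⟨(t + r + 1 : ℝ), by positivity, ?_⟩
  filter_upwards [eventually_ge_atTop 1] with n hn
  have h1 : 1 ≤ fMax r n β := one_le_fMax hr hn β
  have hub : fMax k n α ≤ t + r + fMax r n β := by
    apply csSup_le
    · exact ⟨0, ∅, fun ℓ S hS hScard => by
        rw [Finset.subset_empty.mp hS] at hScard; simp at hScard,
        Finset.card_empty⟩
    · rintro m ⟨F, hF, rfl⟩
      exact key_bound htr α β hβ hadj F hF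
  have hnat : fMax k n α ≤ (t + r + 1) * fMax r n β := by
    calc fMax k n α ≤ t + r + fMax r n β := hub
      _ ≤ (t + r) * fMax r n β + fMax r n β := by
          have := Nat.le_mul_of_pos_right (t + r) (show 0 < fMax r n β by omega)
          omega
      _ = (t + r + 1) * fMax r n β := by ring
  calc (fMax k n α : ℝ) ≤ ((t + r + 1) * fMax r n β : ℕ) := by exact_mod_cast hnat
    _ = (t + r + 1 : ℝ) * (fMax r n β : ℝ) := by push_cast; ring
end

section
/- Let k ≥ 2t be positive integers and let α = (a_1,…,a_k) ∈ F_2^k be such that t is the maximum index with a_t = 1 (so a_i = 0 for all t < i ≤ k). Then f_α(n) ≤ (1 + o(1))·(t!·n)^{1/t}; that is, limsup_{n→∞} f_α(n)/(t!·n)^{1/t} ≤ 1. -/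
open Filter

lemma indicator_dot {n : ℕ} (s s' : Finset (Fin n)) :
    (∑ x : Fin n, (if x ∈ s then (1 : ZMod 2) else 0) * (if x ∈ s' then (1 : ZMod 2) else 0))
      = ((s ∩ s').card : ZMod 2) := by
  have h1 : ∀ x : Fin n, (if x ∈ s then (1 : ZMod 2) else 0) * (if x ∈ s' then (1 : ZMod 2) else 0)
      = if x ∈ s ∩ s' then (1 : ZMod 2) else 0 := by
    intro x
    by_cases hx : x ∈ s <;> by_cases hx' : x ∈ s' <;> simp [hx, hx', Finset.mem_inter]
  rw [Finset.sum_congr rfl fun x _ => h1 x, Finset.sum_ite_mem, Finset.univ_inter,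
    Finset.sum_const, nsmul_eq_mul, mul_one]

lemma key (t k n : ℕ) (ht : 1 ≤ t) (hk : 2 * t ≤ k) (α : Fin k → ZMod 2)
    (hat : α ⟨t - 1, Nat.lt_of_lt_of_le (Nat.sub_lt ht Nat.one_pos) (by omega)⟩ = 1)
    (h0 : ∀ i : Fin k, t ≤ i.1 → α i = 0)
    (F : Finset (Finset (Fin n))) (hF : IsIntersecting k n α F) :
    F.card.choose t ≤ n := by
  classical
  set I := F.powersetCard t with hI
  let v : I → (Fin n → ZMod 2) := fun T x =>
    if x ∈ (T : Finset (Finset (Fin n))).inf id then 1 else 0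
  have orth : ∀ T T' : I, (∑ x, v T x * v T' x) = if T = T' then 1 else 0 := by
    rintro ⟨T, hT⟩ ⟨T', hT'⟩
    rw [Finset.mem_powersetCard] at hT hT'
    have hdot : (∑ x, v ⟨T, by rw [hI, Finset.mem_powersetCard]; exact hT⟩ x *
        v ⟨T', by rw [hI, Finset.mem_powersetCard]; exact hT'⟩ x)
        = (((T ∪ T').inf id).card : ZMod 2) := by
      have hu : (T ∪ T').inf id = T.inf id ∩ T'.inf id := by
        rw [Finset.inf_union, Finset.inf_eq_inter]
      rw [hu]
      exact indicator_dot _ _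
    rw [hdot]
    by_cases heq : T = T'
    · subst heq
      simp only [Finset.union_self]
      have := hF ⟨t - 1, by omega⟩ T hT.1 (by simp [hT.2]; omega)
      rw [this, hat]
      simp
    · have hsub : T ⊆ T ∪ T' := Finset.subset_union_left
      have hclt : t < (T ∪ T').card := by
        rcases lt_or_ge t (T ∪ T').card with h | h
        · exact h
        · exfalso
          have hEq : T = T ∪ T' := Finset.eq_of_subset_of_card_le hsub (by omega)
          have : T' ⊆ T := by rw [hEq]; exact Finset.subset_union_right
          exact heq (Finset.eq_of_subset_of_card_le this (by omega)).symm
      have hcle : (T ∪ T').card ≤ 2 * t := by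
        have := Finset.card_union_le T T'
        omega
      have hunion : T ∪ T' ⊆ F := Finset.union_subset hT.1 hT'.1
      have := hF ⟨(T ∪ T').card - 1, by omega⟩ (T ∪ T') hunion (by show (T ∪ T').card = (T ∪ T').card - 1 + 1; omega)
      rw [this, h0 ⟨(T ∪ T').card - 1, by omega⟩ (by simp; omega)]
      simp [heq, Subtype.ext_iff]
  have lin : LinearIndependent (ZMod 2) v := by
    rw [Fintype.linearIndependent_iff]
    intro g hg T'
    have hx : ∀ x, (∑ T, g T * v T x) = 0 := by
      intro x
      have := congrFun hg x
      simpa [Finset.sum_apply] using this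
    calc g T' = ∑ T, g T * (if T = T' then 1 else 0) := by simp
      _ = ∑ T, g T * ∑ x, v T x * v T' x := by simp_rw [orth]
      _ = ∑ x, ∑ T, g T * (v T x * v T' x) := by
          simp_rw [Finset.mul_sum]; rw [Finset.sum_comm]
      _ = ∑ x, (∑ T, g T * v T x) * v T' x := by simp_rw [Finset.sum_mul, mul_assoc]
      _ = 0 := by
          simp only [Finset.univ_eq_attach] at hx
          simp [hx]
  have hcard := lin.fintype_card_le_finrank
  rw [Module.finrank_fintype_fun_eq_card, Fintype.card_fin] at hcard
  rwa [Fintype.card_coe, hI, Finset.card_powersetCard] at hcard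

lemma card_le_real (t k n : ℕ) (ht : 1 ≤ t) (hk : 2 * t ≤ k) (α : Fin k → ZMod 2)
    (hat : α ⟨t - 1, Nat.lt_of_lt_of_le (Nat.sub_lt ht Nat.one_pos) (by omega)⟩ = 1)
    (h0 : ∀ i : Fin k, t ≤ i.1 → α i = 0)
    (F : Finset (Finset (Fin n))) (hF : IsIntersecting k n α F) :
    (F.card : ℝ) ≤ (t - 1 : ℕ) + ((t.factorial : ℝ) * n) ^ ((1 : ℝ) / t) := by
  set m := F.card with hm
  have hpos : (0 : ℝ) ≤ ((t.factorial : ℝ) * n) ^ ((1 : ℝ) / t) :=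
    Real.rpow_nonneg (by positivity) _
  rcases lt_or_ge m t with hlt | hle
  · have : (m : ℝ) ≤ (t - 1 : ℕ) := by exact_mod_cast Nat.le_of_lt_succ (by omega)
    linarith
  · have hchoose : m.choose t ≤ n := key t k n ht hk α hat h0 F hF
    have hdesc : (m + 1 - t) ^ t ≤ t.factorial * n := by
      calc (m + 1 - t) ^ t ≤ m.descFactorial t := Nat.pow_sub_le_descFactorial m t
        _ = t.factorial * m.choose t := Nat.descFactorial_eq_factorial_mul_choose m t
        _ ≤ t.factorial * n := Nat.mul_le_mul_left _ hchoose
    have hreal : ((m + 1 - t : ℕ) : ℝ) ^ (t : ℕ) ≤ (t.factorial : ℝ) * n := by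
      exact_mod_cast hdesc
    have hb : ((m + 1 - t : ℕ) : ℝ) ≤ ((t.factorial : ℝ) * n) ^ ((1 : ℝ) / t) := by
      have h1 : ((((m + 1 - t : ℕ) : ℝ) ^ (t : ℕ)) ^ ((1 : ℝ) / t))
          ≤ ((t.factorial : ℝ) * n) ^ ((1 : ℝ) / t) :=
        Real.rpow_le_rpow (by positivity) hreal (by positivity)
      rwa [← Real.rpow_natCast ((m + 1 - t : ℕ) : ℝ) t, ← Real.rpow_mul (by positivity),
        mul_one_div, div_self (by exact_mod_cast Nat.one_le_iff_ne_zero.mp ht : (t : ℝ) ≠ 0),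
        Real.rpow_one] at h1
    have hsplit : (m : ℝ) = ((m + 1 - t : ℕ) : ℝ) + ((t - 1 : ℕ) : ℝ) := by
      have : m = (m + 1 - t) + (t - 1) := by omega
      exact_mod_cast congrArg (Nat.cast : ℕ → ℝ) this
    rw [hsplit]
    linarith

lemma fMax_le_real (t k n : ℕ) (ht : 1 ≤ t) (hk : 2 * t ≤ k) (α : Fin k → ZMod 2)
    (hat : α ⟨t - 1, Nat.lt_of_lt_of_le (Nat.sub_lt ht Nat.one_pos) (by omega)⟩ = 1)
    (h0 : ∀ i : Fin k, t ≤ i.1 → α i = 0) :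
    (fMax k n α : ℝ) ≤ (t - 1 : ℕ) + ((t.factorial : ℝ) * n) ^ ((1 : ℝ) / t) := by
  classical
  have hne : {m | ∃ F : Finset (Finset (Fin n)), IsIntersecting k n α F ∧ F.card = m}.Nonempty := by
    refine ⟨0, ∅, ?_, by simp⟩
    intro ℓ S hS hScard
    exfalso
    have : S = ∅ := Finset.subset_empty.mp hS
    rw [this] at hScard
    simp at hScard
  have hbdd : BddAbove {m | ∃ F : Finset (Finset (Fin n)), IsIntersecting k n α F ∧ F.card = m} := by
    refine ⟨2 ^ n, ?_⟩
    rintro m ⟨F, _, rfl⟩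
    calc F.card ≤ (Finset.univ : Finset (Finset (Fin n))).card := Finset.card_le_card (Finset.subset_univ _)
      _ = 2 ^ n := by simp [Finset.card_univ]
  obtain ⟨F, hF, hFcard⟩ := Nat.sSup_mem hne hbdd
  rw [fMax, ← hFcard]
  exact card_le_real t k n ht hk α hat h0 F hF

theorem stmt10 (t k : ℕ) (ht : 1 ≤ t) (hk : 2 * t ≤ k) (α : Fin k → ZMod 2)
    (hat : α ⟨t - 1, by omega⟩ = 1)
    (h0 : ∀ i : Fin k, t ≤ i.1 → α i = 0) :
    limsup (fun n : ℕ => (fMax k n α : ℝ) /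
      (((t.factorial : ℝ) * (n : ℝ)) ^ ((1 : ℝ) / (t : ℝ)))) atTop ≤ 1 := by
  set D : ℕ → ℝ := fun n => ((t.factorial : ℝ) * (n : ℝ)) ^ ((1 : ℝ) / (t : ℝ)) with hD
  set u : ℕ → ℝ := fun n => (fMax k n α : ℝ) / D n with hu
  set g : ℕ → ℝ := fun n => 1 + ((t - 1 : ℕ) : ℝ) / D n with hg
  have hDpos : ∀ n : ℕ, 1 ≤ n → 0 < D n := by
    intro n hn
    apply Real.rpow_pos_of_pos
    have : (0 : ℝ) < (n : ℝ) := by exact_mod_cast hn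
    positivity
  have hle : ∀ n : ℕ, u n ≤ g n := by
    intro n
    rcases Nat.eq_zero_or_pos n with rfl | hn
    · have hD0 : D 0 = 0 := by
        simp only [hD, Nat.cast_zero, mul_zero]
        rw [Real.zero_rpow (by positivity)]
      simp [hu, hg, hD0]
    · have hDn := hDpos n hn
      rw [hu, hg]
      rw [div_le_iff₀ hDn]
      have := fMax_le_real t k n ht hk α hat h0
      calc (fMax k n α : ℝ) ≤ ((t - 1 : ℕ) : ℝ) + D n := this
        _ = (1 + ((t - 1 : ℕ) : ℝ) / D n) * D n := by field_simp; ring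
  have hDtop : Tendsto D atTop atTop := by
    apply (tendsto_rpow_atTop (by positivity : (0:ℝ) < 1 / t)).comp
    apply Tendsto.const_mul_atTop (by positivity : (0:ℝ) < t.factorial)
    exact tendsto_natCast_atTop_atTop
  have hgtend : Tendsto g atTop (nhds 1) := by
    have : Tendsto (fun n => ((t - 1 : ℕ) : ℝ) / D n) atTop (nhds 0) :=
      Tendsto.div_atTop tendsto_const_nhds hDtop
    simpa using tendsto_const_nhds.add this
  have hglimsup : limsup g atTop = 1 := hgtend.limsup_eq
  have hucob : IsCoboundedUnder (· ≤ ·) atTop u := by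
    refine IsBoundedUnder.isCoboundedUnder_le (isBoundedUnder_of ⟨0, fun n => ?_⟩)
    have h1 : (0:ℝ) ≤ (fMax k n α : ℝ) := Nat.cast_nonneg _
    have h2 : (0:ℝ) ≤ D n := by
      rw [hD]; exact Real.rpow_nonneg (by positivity) _
    exact div_nonneg h1 h2
  have hgbd : IsBoundedUnder (· ≤ ·) atTop g := hgtend.isBoundedUnder_le
  calc limsup u atTop ≤ limsup g atTop :=
        limsup_le_limsup (Eventually.of_forall hle) hucob hgbd
    _ = 1 := hglimsup
end
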